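/- arXiv:math-ph/9903017 — 10 statements merged into one kernel-verified Lean document; each statement's English description precedes it below -/
import Mathlib

section
/- Suppose the families (A_r), (D_r), (P⁺_r), (P⁻_r) of complex k×k matrices indexed by r ∈ ℤ are given, and define, for each nonzero λ ∈ ℂ, the Ward operators Ŵ⁺ and Ŵ⁻ on sequences f : ℤ → ℂᵏ by (Ŵ⁺f)_r = P⁺_{r−1}·f_{r−1} − λ·A_r·f_r and (Ŵ⁻f)_r = P⁻_{r+1}·f_{r+1} + λ⁻¹·D_r·f_r. Then Ŵ⁺(Ŵ⁻f) = Ŵ⁻(Ŵ⁺f) for every nonzero λ ∈ ℂ and every sequence f : ℤ → ℂᵏ if and only if for every r ∈ ℤ the discrete Nahm equations hold: P⁻_{r+1}·A_{r+1} = A_r·P⁻_{r+1}, P⁺_{r−1}·D_{r−1} = D_r·P⁺_{r−1}, and P⁺_{r−1}·P⁻_r + D_r·A_r = P⁻_{r+1}·P⁺_r + A_r·D_r. -/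
open Matrix

/-- Ward operator `Ŵ⁺` : `(Ŵ⁺f)_r = P⁺_{r−1}·f_{r−1} − λ·A_r·f_r`. -/
noncomputable def wardPlus (k : ℕ) (A Pp : ℤ → Matrix (Fin k) (Fin k) ℂ) (l : ℂ)
    (f : ℤ → Fin k → ℂ) : ℤ → Fin k → ℂ :=
  fun r => Pp (r - 1) *ᵥ f (r - 1) - l • (A r *ᵥ f r)

/-- Ward operator `Ŵ⁻` : `(Ŵ⁻f)_r = P⁻_{r+1}·f_{r+1} + λ⁻¹·D_r·f_r`. -/
noncomputable def wardMinus (k : ℕ) (D Pm : ℤ → Matrix (Fin k) (Fin k) ℂ) (l : ℂ)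
    (f : ℤ → Fin k → ℂ) : ℤ → Fin k → ℂ :=
  fun r => Pm (r + 1) *ᵥ f (r + 1) + l⁻¹ • (D r *ᵥ f r)

lemma matrix_ext_of_mulVec {k : ℕ} {M N : Matrix (Fin k) (Fin k) ℂ}
    (h : ∀ v : Fin k → ℂ, M *ᵥ v = N *ᵥ v) : M = N := by
  ext i j
  have := congrFun (h (Pi.single j 1)) i
  simpa [Matrix.mulVec_single] using this

theorem stmt0 (k : ℕ) (hk : 1 ≤ k) (A D Pp Pm : ℤ → Matrix (Fin k) (Fin k) ℂ) :
    (∀ l : ℂ, l ≠ 0 → ∀ f : ℤ → Fin k → ℂ,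
        wardPlus k A Pp l (wardMinus k D Pm l f) =
          wardMinus k D Pm l (wardPlus k A Pp l f)) ↔
      (∀ r : ℤ,
        Pm (r + 1) * A (r + 1) = A r * Pm (r + 1) ∧
        Pp (r - 1) * D (r - 1) = D r * Pp (r - 1) ∧
        Pp (r - 1) * Pm r + D r * A r = Pm (r + 1) * Pp r + A r * D r) := by
  constructor
  · intro h r
    refine ⟨?_, ?_, ?_⟩
    · -- plug f supported at r+1
      apply matrix_ext_of_mulVec
      intro v
      have h1 := congrFun (h 1 one_ne_zero
        (fun s => if s = r + 1 then v else 0)) r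
      simp only [wardPlus, wardMinus] at h1
      have e1 : (r : ℤ) - 1 + 1 = r := by ring
      have e2 : (r : ℤ) + 1 - 1 = r := by ring
      have n1 : (r : ℤ) ≠ r + 1 := by omega
      have n2 : (r : ℤ) - 1 ≠ r + 1 := by omega
      simp only [e1, e2, n1, n2, if_true, if_false, ite_false, ite_true,
        Matrix.mulVec_zero, Matrix.mulVec_add, Matrix.mulVec_smul,
        Matrix.mulVec_mulVec, smul_zero, add_zero, zero_add, zero_sub,
        smul_neg, one_smul, inv_one, sub_zero, Matrix.mulVec_neg] at h1
      exact (neg_injective h1).symm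
    · -- plug f supported at r-1
      apply matrix_ext_of_mulVec
      intro v
      have h1 := congrFun (h 1 one_ne_zero
        (fun s => if s = r - 1 then v else 0)) r
      simp only [wardPlus, wardMinus] at h1
      have e1 : (r : ℤ) - 1 + 1 = r := by ring
      have e2 : (r : ℤ) + 1 - 1 = r := by ring
      have n1 : (r : ℤ) ≠ r - 1 := by omega
      have n2 : (r : ℤ) + 1 ≠ r - 1 := by omega
      simp only [e1, e2, n1, n2, if_true, if_false, ite_false, ite_true,
        Matrix.mulVec_zero, Matrix.mulVec_add, Matrix.mulVec_smul,
        Matrix.mulVec_mulVec, smul_zero, add_zero, zero_add, zero_sub,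
        smul_neg, one_smul, inv_one, sub_zero, neg_zero, neg_neg] at h1
      exact h1
    · -- plug f supported at r
      apply matrix_ext_of_mulVec
      intro v
      have h1 := congrFun (h 1 one_ne_zero
        (fun s => if s = r then v else 0)) r
      simp only [wardPlus, wardMinus] at h1
      have e1 : (r : ℤ) - 1 + 1 = r := by ring
      have e2 : (r : ℤ) + 1 - 1 = r := by ring
      have n1 : (r : ℤ) - 1 ≠ r := by omega
      have n2 : (r : ℤ) + 1 ≠ r := by omega
      simp only [e1, e2, n1, n2, if_true, if_false, ite_false, ite_true,
        Matrix.mulVec_zero, Matrix.mulVec_add, Matrix.mulVec_smul,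
        Matrix.mulVec_mulVec, smul_zero, add_zero, zero_add, zero_sub,
        smul_neg, one_smul, inv_one, sub_zero, neg_zero] at h1
      simp only [Matrix.mulVec_neg, Matrix.mulVec_mulVec] at h1
      simp only [Matrix.add_mulVec]
      rw [← sub_eq_add_neg] at h1  -- may or may not apply
      exact sub_eq_sub_iff_add_eq_add.mp h1
  · intro h l hl f
    funext r
    obtain ⟨h1, h2, h3⟩ := h r
    simp only [wardPlus, wardMinus]
    have e1 : (r : ℤ) - 1 + 1 = r := by ring
    have e2 : (r : ℤ) + 1 - 1 = r := by ring
    simp only [e1, e2, Matrix.mulVec_add, Matrix.mulVec_smul, Matrix.mulVec_sub,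
      Matrix.mulVec_mulVec, smul_add, smul_sub, smul_smul,
      inv_mul_cancel₀ hl, mul_inv_cancel₀ hl, one_smul]
    rw [h1, h2]
    have key : (Pp (r-1) * Pm r) *ᵥ f r - (A r * D r) *ᵥ f r
        = (Pm (r+1) * Pp r) *ᵥ f r - (D r * A r) *ᵥ f r := by
      have : Pp (r-1) * Pm r - A r * D r = Pm (r+1) * Pp r - D r * A r := by
        rw [sub_eq_sub_iff_add_eq_add]
        exact h3
      rw [← Matrix.sub_mulVec, ← Matrix.sub_mulVec, this]
    have := key
    rw [sub_eq_sub_iff_add_eq_add] at this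
    -- goal rearrangement
    calc (Pp (r-1) * Pm r) *ᵥ f r + l⁻¹ • (D r * Pp (r-1)) *ᵥ f (r-1)
          - (l • (A r * Pm (r+1)) *ᵥ f (r+1) + (A r * D r) *ᵥ f r)
        = ((Pp (r-1) * Pm r) *ᵥ f r + (D r * A r) *ᵥ f r)
          + (l⁻¹ • (D r * Pp (r-1)) *ᵥ f (r-1) - l • (A r * Pm (r+1)) *ᵥ f (r+1)
            - ((A r * D r) *ᵥ f r + (D r * A r) *ᵥ f r)) := by abel
      _ = ((Pm (r+1) * Pp r) *ᵥ f r + (A r * D r) *ᵥ f r)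
          + (l⁻¹ • (D r * Pp (r-1)) *ᵥ f (r-1) - l • (A r * Pm (r+1)) *ᵥ f (r+1)
            - ((A r * D r) *ᵥ f r + (D r * A r) *ᵥ f r)) := by rw [this]
      _ = (Pm (r+1) * Pp r) *ᵥ f r - l • (A r * Pm (r+1)) *ᵥ f (r+1)
          + (l⁻¹ • (D r * Pp (r-1)) *ᵥ f (r-1) - (D r * A r) *ᵥ f r) := by abel
end

section
/- Let A₀, B₀, D₀, A₁, B₁, D₁, P⁺, P⁻ be complex k×k matrices with P⁺ and P⁻ invertible, satisfying the DN equations on [0,1]: P⁻·A₁ = A₀·P⁻, P⁺·D₀ = D₁·P⁺, B₀ = P⁻·P⁺ + A₀·D₀, B₁ = P⁺·P⁻ + D₁·A₁. Fix η, ζ ∈ ℂ and suppose f₀, f₁ ∈ ℂᵏ satisfy the simultaneous parallel equations P⁺·f₀ = (η·A₁ + I)·f₁ and η·P⁻·f₁ + (ζ·I + D₀)·f₀ = 0, with (f₀, f₁) ≠ (0,0). Then f₀ ≠ 0, f₁ ≠ 0, det M₀(η,ζ) = 0 and det M₁(η,ζ) = 0. -/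
open Matrix

theorem stmt3 (k : ℕ) (hk : 1 ≤ k)
    (A0 B0 D0 A1 B1 D1 Pp Pm : Matrix (Fin k) (Fin k) ℂ)
    (hPp : IsUnit Pp) (hPm : IsUnit Pm)
    (h1 : Pm * A1 = A0 * Pm) (h2 : Pp * D0 = D1 * Pp)
    (h3 : B0 = Pm * Pp + A0 * D0) (h4 : B1 = Pp * Pm + D1 * A1)
    (η ζ : ℂ) (f0 f1 : Fin k → ℂ)
    (hpar1 : Pp *ᵥ f0 = (η • A1 + 1) *ᵥ f1)
    (hpar2 : η • (Pm *ᵥ f1) + (ζ • (1 : Matrix (Fin k) (Fin k) ℂ) + D0) *ᵥ f0 = 0)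
    (hne : ¬(f0 = 0 ∧ f1 = 0)) :
    f0 ≠ 0 ∧ f1 ≠ 0 ∧
      ((η * ζ) • A0 + η • B0 + ζ • (1 : Matrix (Fin k) (Fin k) ℂ) + D0).det = 0 ∧
      ((η * ζ) • A1 + η • B1 + ζ • (1 : Matrix (Fin k) (Fin k) ℂ) + D1).det = 0 := by
  have hPpinj := Matrix.mulVec_injective_iff_isUnit.2 hPp
  have hPminj := Matrix.mulVec_injective_iff_isUnit.2 hPm
  -- rewritten parallel equations
  have hp1 : Pp *ᵥ f0 = η • (A1 *ᵥ f1) + f1 := by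
    rw [hpar1]
    simp [Matrix.add_mulVec, Matrix.smul_mulVec]
  have key : η • (Pm *ᵥ f1) = -(ζ • f0 + D0 *ᵥ f0) := by
    have h := hpar2
    rw [Matrix.add_mulVec, Matrix.smul_mulVec, Matrix.one_mulVec] at h
    linear_combination (norm := module) h
  -- nonvanishing
  have hf0 : f0 ≠ 0 := by
    intro h0
    apply hne
    refine ⟨h0, ?_⟩
    subst h0
    have k2 : η • (Pm *ᵥ f1) = 0 := by simpa using key
    have k1 : η • (A1 *ᵥ f1) + f1 = 0 := by simpa using hp1.symm
    rcases eq_or_ne η 0 with hη | hη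
    · simpa [hη] using k1
    · have hz : Pm *ᵥ f1 = 0 := by
        rcases smul_eq_zero.1 k2 with h | h
        · exact absurd h hη
        · exact h
      exact hPminj (by simpa using hz : Pm *ᵥ f1 = Pm *ᵥ 0)
  have hf1 : f1 ≠ 0 := by
    intro h0
    apply hne
    refine ⟨?_, h0⟩
    subst h0
    exact hPpinj (by simpa using hp1 : Pp *ᵥ f0 = Pp *ᵥ 0)
  -- M0 kills f0
  have hM0 : ((η * ζ) • A0 + η • B0 + ζ • (1 : Matrix (Fin k) (Fin k) ℂ) + D0) *ᵥ f0 = 0 := by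
    have e1 : (Pm * Pp) *ᵥ f0 = η • (A0 *ᵥ (Pm *ᵥ f1)) + Pm *ᵥ f1 := by
      rw [← Matrix.mulVec_mulVec, hp1, Matrix.mulVec_add, Matrix.mulVec_smul,
        Matrix.mulVec_mulVec, h1, ← Matrix.mulVec_mulVec]
    have e2 : η • (A0 *ᵥ (Pm *ᵥ f1)) = -(ζ • (A0 *ᵥ f0) + (A0 * D0) *ᵥ f0) := by
      rw [← Matrix.mulVec_smul, key, Matrix.mulVec_neg, Matrix.mulVec_add,
        Matrix.mulVec_smul, Matrix.mulVec_mulVec]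
    rw [h3]
    simp only [Matrix.add_mulVec, Matrix.smul_mulVec, Matrix.one_mulVec]
    rw [show (Pm * Pp) *ᵥ f0 = _ from e1]
    linear_combination (norm := module) η • e2 + key
  -- M1 kills f1
  have hM1 : ((η * ζ) • A1 + η • B1 + ζ • (1 : Matrix (Fin k) (Fin k) ℂ) + D1) *ᵥ f1 = 0 := by
    have e3a : Pp *ᵥ (D0 *ᵥ f0) = η • (D1 *ᵥ (A1 *ᵥ f1)) + D1 *ᵥ f1 := by
      rw [Matrix.mulVec_mulVec, h2, ← Matrix.mulVec_mulVec, hp1, Matrix.mulVec_add,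
        Matrix.mulVec_smul]
    have e3 : η • (Pp *ᵥ (Pm *ᵥ f1)) =
        -(ζ • (η • (A1 *ᵥ f1) + f1) + (η • (D1 *ᵥ (A1 *ᵥ f1)) + D1 *ᵥ f1)) := by
      rw [← Matrix.mulVec_smul, key, Matrix.mulVec_neg, Matrix.mulVec_add,
        Matrix.mulVec_smul, hp1, e3a]
    rw [h4]
    simp only [Matrix.add_mulVec, Matrix.smul_mulVec, Matrix.one_mulVec,
      ← Matrix.mulVec_mulVec]
    linear_combination (norm := module) e3
  refine ⟨hf0, hf1, ?_, ?_⟩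
  · exact Matrix.exists_mulVec_eq_zero_iff.1 ⟨f0, hf0, hM0⟩
  · exact Matrix.exists_mulVec_eq_zero_iff.1 ⟨f1, hf1, hM1⟩
end

section
/- Let A₀, B₀, D₀, A₁, B₁, D₁, P⁺, P⁻ be complex k×k matrices with P⁺ and P⁻ invertible, satisfying the DN equations on [0,1]: P⁻·A₁ = A₀·P⁻, P⁺·D₀ = D₁·P⁺, B₀ = P⁻·P⁺ + A₀·D₀, B₁ = P⁺·P⁻ + D₁·A₁. Then for every η, ζ ∈ ℂ the following are equivalent: (i) det M₀(η,ζ) = 0; (ii) there exist vectors f₀, f₁ ∈ ℂᵏ, not both zero, satisfying P⁺·f₀ = (η·A₁ + I)·f₁ and η·P⁻·f₁ + (ζ·I + D₀)·f₀ = 0. -/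
open Matrix

theorem stmt4 (k : ℕ) (hk : 1 ≤ k)
    (A0 B0 D0 A1 B1 D1 Pp Pm : Matrix (Fin k) (Fin k) ℂ)
    (hPp : IsUnit Pp) (hPm : IsUnit Pm)
    (h1 : Pm * A1 = A0 * Pm) (h2 : Pp * D0 = D1 * Pp)
    (h3 : B0 = Pm * Pp + A0 * D0) (h4 : B1 = Pp * Pm + D1 * A1)
    (η ζ : ℂ) :
    ((η * ζ) • A0 + η • B0 + ζ • (1 : Matrix (Fin k) (Fin k) ℂ) + D0).det = 0 ↔
      ∃ f0 f1 : Fin k → ℂ, ¬(f0 = 0 ∧ f1 = 0) ∧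
        Pp *ᵥ f0 = (η • A1 + 1) *ᵥ f1 ∧
        η • (Pm *ᵥ f1) + (ζ • (1 : Matrix (Fin k) (Fin k) ℂ) + D0) *ᵥ f0 = 0 := by
  have hPmdet : IsUnit Pm.det := (Matrix.isUnit_iff_isUnit_det Pm).mp hPm
  have hPmi : Pm * Pm⁻¹ = 1 := Matrix.mul_nonsing_inv Pm hPmdet
  have hPmi' : Pm⁻¹ * Pm = 1 := Matrix.nonsing_inv_mul Pm hPmdet
  set C : Matrix (Fin k) (Fin k) ℂ := ζ • (1 : Matrix (Fin k) (Fin k) ℂ) + D0 with hC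
  have hN : (η * ζ) • A0 + η • B0 + ζ • (1 : Matrix (Fin k) (Fin k) ℂ) + D0
      = η • (Pm * Pp) + (η • A0 + 1) * C := by
    rw [h3, hC]
    simp only [smul_add, add_mul, mul_add, Matrix.smul_mul, Matrix.mul_smul, one_mul, mul_one,
      smul_smul]
    module
  have hcomm : Pm * (η • A1 + 1) = (η • A0 + 1) * Pm := by
    simp only [mul_add, add_mul, Matrix.mul_smul, Matrix.smul_mul, one_mul, mul_one, h1]
  have hPminj : ∀ x y : Fin k → ℂ, Pm *ᵥ x = Pm *ᵥ y → x = y := by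
    intro x y h
    have := congrArg (fun w => Pm⁻¹ *ᵥ w) h
    simpa [Matrix.mulVec_mulVec, hPmi', Matrix.one_mulVec] using this
  have hPmPmi : ∀ w : Fin k → ℂ, Pm *ᵥ (Pm⁻¹ *ᵥ w) = w := by
    intro w
    rw [Matrix.mulVec_mulVec, hPmi, Matrix.one_mulVec]
  rw [hN]
  constructor
  · intro hdet
    obtain ⟨v, hv0, hv⟩ := (Matrix.exists_mulVec_eq_zero_iff).mpr hdet
    by_cases hη : η = 0
    · refine ⟨v, Pp *ᵥ v, fun h => hv0 h.1, ?_, ?_⟩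
      · simp [hη]
      · subst hη
        simpa using hv
    · set w : Fin k → ℂ := C *ᵥ v with hw
      set f1 : Fin k → ℂ := (-η⁻¹) • (Pm⁻¹ *ᵥ w) with hf1
      have h5 : η • (Pm *ᵥ (Pp *ᵥ v)) = -(η • (A0 *ᵥ w) + w) := by
        have hv' := hv
        simp only [Matrix.add_mulVec, ← Matrix.mulVec_mulVec, Matrix.smul_mulVec,
          Matrix.one_mulVec] at hv'
        rw [← hw] at hv'
        linear_combination (norm := module) hv'
      have h5' : η • (Pm *ᵥ (Pp *ᵥ v)) = -((η • A0 + 1) *ᵥ w) := by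
        rw [h5, Matrix.add_mulVec, Matrix.smul_mulVec, Matrix.one_mulVec]
      have hPmf1 : Pm *ᵥ f1 = (-η⁻¹) • w := by
        rw [hf1, Matrix.mulVec_smul, hPmPmi]
      refine ⟨v, f1, fun h => hv0 h.1, ?_, ?_⟩
      · apply hPminj
        apply smul_right_injective (Fin k → ℂ) hη
        show η • (Pm *ᵥ (Pp *ᵥ v)) = η • (Pm *ᵥ ((η • A1 + 1) *ᵥ f1))
        have hr : Pm *ᵥ ((η • A1 + 1) *ᵥ f1) = (η • A0 + 1) *ᵥ (Pm *ᵥ f1) := by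
          rw [Matrix.mulVec_mulVec, hcomm, ← Matrix.mulVec_mulVec]
        rw [hr, hPmf1, Matrix.mulVec_smul, smul_smul, mul_neg, mul_inv_cancel₀ hη,
          neg_one_smul, h5']
      · rw [hPmf1, smul_smul, mul_neg, mul_inv_cancel₀ hη, neg_one_smul, hw]
        simp
  · rintro ⟨f0, f1, hne, he1, he2⟩
    have hf0 : f0 ≠ 0 := by
      intro h0
      apply hne
      refine ⟨h0, ?_⟩
      subst h0
      simp only [Matrix.mulVec_zero] at he1 he2
      rw [add_zero] at he2
      have hηf1 : η • f1 = 0 := by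
        have := congrArg (fun u => Pm⁻¹ *ᵥ u) he2
        simpa [Matrix.mulVec_smul, Matrix.mulVec_mulVec, hPmi'] using this
      have hfix : (η • A1 + 1) *ᵥ f1 = f1 := by
        rw [Matrix.add_mulVec, Matrix.smul_mulVec, ← Matrix.mulVec_smul, hηf1,
          Matrix.mulVec_zero, Matrix.one_mulVec, zero_add]
      exact hfix.symm.trans he1.symm
    refine (Matrix.exists_mulVec_eq_zero_iff).mp ⟨f0, hf0, ?_⟩
    have hC0 : C *ᵥ f0 = -(η • (Pm *ᵥ f1)) := by linear_combination (norm := module) he2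
    have e1 : (η • (Pm * Pp)) *ᵥ f0 = η • ((η • A0 + 1) *ᵥ (Pm *ᵥ f1)) := by
      rw [Matrix.smul_mulVec, ← Matrix.mulVec_mulVec, he1, Matrix.mulVec_mulVec, hcomm,
        ← Matrix.mulVec_mulVec]
    have e2 : ((η • A0 + 1) * C) *ᵥ f0 = -(η • ((η • A0 + 1) *ᵥ (Pm *ᵥ f1))) := by
      rw [← Matrix.mulVec_mulVec, hC0, Matrix.mulVec_neg, Matrix.mulVec_smul]
    rw [Matrix.add_mulVec, e1, e2, add_neg_cancel]
end

section
/- Let n ≥ 1 and for each r ∈ {0,1,…,n} let A_r, B_r, D_r be complex k×k matrices, and for each r ∈ {0,…,n−1} let P⁺_r and P⁻_{r+1} be invertible k×k matrices, such that for every r ∈ {0,…,n−1} the DN equations hold on [r,r+1]: P⁻_{r+1}·A_{r+1} = A_r·P⁻_{r+1}, P⁺_r·D_r = D_{r+1}·P⁺_r, B_r = P⁻_{r+1}·P⁺_r + A_r·D_r, and B_{r+1} = P⁺_r·P⁻_{r+1} + D_{r+1}·A_{r+1}. Then the zero locus of the spectral polynomial is independent of r: for all r, r' ∈ {0,…,n}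 and all η, ζ ∈ ℂ, det M_r(η,ζ) = 0 if and only if det M_{r'}(η,ζ) = 0. -/
open Matrix

lemma det_mul_add_smul_one_comm {k : ℕ} (U V : Matrix (Fin k) (Fin k) ℂ) (η : ℂ) :
    (U * V + η • (1 : Matrix (Fin k) (Fin k) ℂ)).det
      = (V * U + η • (1 : Matrix (Fin k) (Fin k) ℂ)).det := by
  rcases eq_or_ne η 0 with h | h
  · simp [h, det_mul, mul_comm]
  · have h1 : U * V + η • 1 = η • (1 + (η⁻¹ • U) * V) := by
      rw [smul_add, smul_mul_assoc, smul_smul, mul_inv_cancel₀ h, one_smul, add_comm]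
    have h2 : V * U + η • 1 = η • (1 + V * (η⁻¹ • U)) := by
      rw [smul_add, mul_smul_comm, smul_smul, mul_inv_cancel₀ h, one_smul, add_comm]
    rw [h1, h2, det_smul, det_smul, det_one_add_mul_comm]

lemma key {k : ℕ} (X Y X' Y' P Q : Matrix (Fin k) (Fin k) ℂ)
    (hP : IsUnit P) (hQ : IsUnit Q)
    (h1 : X * Q = Q * X') (h2 : P * Y = Y' * P) (η : ℂ) :
    (X * Y + η • (Q * P)).det = (Y' * X' + η • (P * Q)).det := by
  have hPd : IsUnit P.det := (isUnit_iff_isUnit_det P).mp hP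
  have hQd : IsUnit Q.det := (isUnit_iff_isUnit_det Q).mp hQ
  have hPi := mul_nonsing_inv P hPd
  have hPi' := nonsing_inv_mul P hPd
  have hQi := mul_nonsing_inv Q hQd
  have e1 : X * Y + η • (Q * P) = Q * (X' * (Q⁻¹ * P⁻¹) * Y' + η • 1) * P := by
    have hY : P⁻¹ * Y' * P = Y := by
      rw [Matrix.mul_assoc, ← h2, ← Matrix.mul_assoc, hPi', Matrix.one_mul]
    have hX : Q * X' * Q⁻¹ = X := by
      rw [← h1, Matrix.mul_assoc, hQi, Matrix.mul_one]
    rw [Matrix.mul_add, Matrix.add_mul]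
    congr 1
    · rw [← hX, ← hY]; noncomm_ring
    · rw [Matrix.mul_smul, smul_mul_assoc, Matrix.mul_one]
  have e2 : Y' * X' + η • (P * Q) = (P * Q) * ((Q⁻¹ * P⁻¹) * Y' * X' + η • 1) := by
    rw [Matrix.mul_add]
    congr 1
    · rw [show P * Q * (Q⁻¹ * P⁻¹ * Y' * X') = (P * (Q * Q⁻¹) * P⁻¹) * Y' * X' by noncomm_ring,
        hQi, Matrix.mul_one, hPi, Matrix.one_mul]
    · rw [Matrix.mul_smul, Matrix.mul_one]
  rw [e1, e2, det_mul, det_mul, det_mul,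
    show X' * (Q⁻¹ * P⁻¹) * Y' = X' * ((Q⁻¹ * P⁻¹) * Y') by noncomm_ring,
    det_mul_add_smul_one_comm, det_mul]
  ring

theorem stmt5 (k n : ℕ) (hk : 1 ≤ k) (hn : 1 ≤ n)
    (A B D Pp Pm : ℕ → Matrix (Fin k) (Fin k) ℂ)
    (hPp : ∀ r < n, IsUnit (Pp r)) (hPm : ∀ r < n, IsUnit (Pm (r + 1)))
    (hDN : ∀ r < n,
      Pm (r + 1) * A (r + 1) = A r * Pm (r + 1) ∧
      Pp r * D r = D (r + 1) * Pp r ∧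
      B r = Pm (r + 1) * Pp r + A r * D r ∧
      B (r + 1) = Pp r * Pm (r + 1) + D (r + 1) * A (r + 1)) :
    ∀ r ≤ n, ∀ r' ≤ n, ∀ η ζ : ℂ,
      ((η * ζ) • A r + η • B r + ζ • (1 : Matrix (Fin k) (Fin k) ℂ) + D r).det = 0 ↔
      ((η * ζ) • A r' + η • B r' + ζ • (1 : Matrix (Fin k) (Fin k) ℂ) + D r').det = 0 := by
  set M : ℕ → ℂ → ℂ → Matrix (Fin k) (Fin k) ℂ := fun r η ζ =>
    (η * ζ) • A r + η • B r + ζ • (1 : Matrix (Fin k) (Fin k) ℂ) + D r with hM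
  have step : ∀ r < n, ∀ η ζ : ℂ, (M r η ζ).det = (M (r + 1) η ζ).det := by
    intro r hr η ζ
    obtain ⟨hA, hD, hB, hB'⟩ := hDN r hr
    have eL : M r η ζ = (η • A r + 1) * (ζ • 1 + D r) + η • (Pm (r + 1) * Pp r) := by
      rw [hM]
      simp only [Matrix.add_mul, Matrix.mul_add, smul_mul_assoc, mul_smul_comm, smul_smul,
        Matrix.one_mul, Matrix.mul_one, smul_add, hB, mul_comm ζ η]
      abel
    have eR : M (r + 1) η ζ
        = (ζ • 1 + D (r + 1)) * (η • A (r + 1) + 1) + η • (Pp r * Pm (r + 1)) := by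
      rw [hM]
      simp only [Matrix.add_mul, Matrix.mul_add, smul_mul_assoc, mul_smul_comm, smul_smul,
        Matrix.one_mul, Matrix.mul_one, smul_add, hB', mul_comm ζ η]
      abel
    rw [eL, eR]
    apply key _ _ _ _ _ _ (hPp r hr) (hPm r hr)
    · rw [Matrix.add_mul, Matrix.mul_add, smul_mul_assoc, mul_smul_comm, hA,
        Matrix.one_mul, Matrix.mul_one]
    · rw [Matrix.add_mul, Matrix.mul_add, smul_mul_assoc, mul_smul_comm, hD,
        Matrix.one_mul, Matrix.mul_one]
  have main : ∀ r ≤ n, ∀ η ζ : ℂ, (M r η ζ).det = (M 0 η ζ).det := by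
    intro r
    induction r with
    | zero => intro _ η ζ; rfl
    | succ m ih =>
      intro hm η ζ
      have hmn : m < n := hm
      rw [← step m hmn η ζ, ih (Nat.le_of_lt hmn) η ζ]
  intro r hr r' hr' η ζ
  rw [show ((η * ζ) • A r + η • B r + ζ • (1 : Matrix (Fin k) (Fin k) ℂ) + D r) = M r η ζ from rfl,
    show ((η * ζ) • A r' + η • B r' + ζ • (1 : Matrix (Fin k) (Fin k) ℂ) + D r') = M r' η ζ from rfl,
    main r hr η ζ, main r' hr' η ζ]
end

section
/- Let A₀, B₀, D₀, A₁, B₁, D₁, P⁺, P⁻ be complex k×k matrices satisfying the DN equations on [0,1]: P⁻·A₁ = A₀·P⁻, P⁺·D₀ = D₁·P⁺, B₀ = P⁻·P⁺ + A₀·D₀, B₁ = P⁺·P⁻ + D₁·A₁, and suppose P⁻ is invertible. Fix η, ζ ∈ ℂ with η ≠ 0. If row vectors g₀, g₁ ∈ ℂᵏ satisfy g₁·M₁(η,ζ) = 0 and η·g₀·P⁻ + g₁·(ζ·I + D₁) = 0, then g₁·P⁺ = g₀·(η·A₀ + I) and g₀·M₀(η,ζ) = 0. -/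
/-!
With `B₁ = P⁺P⁻ + D₁A₁` the pencil factors as `M₁ = η P⁺P⁻ + (ζ + D₁)(ηA₁ + 1)`, and with
`B₀ = P⁻P⁺ + A₀D₀` as `M₀ = η P⁻P⁺ + (ηA₀ + 1)(ζ + D₀)`. Substituting the Ward equation
`g₁(ζ + D₁) = -η g₀P⁻` into `g₁M₁` and moving `P⁻` across `ηA₁ + 1` by `P⁻A₁ = A₀P⁻` gives
`g₁M₁ = (g₁P⁺ - g₀(ηA₀ + 1)) ηP⁻`, so invertibility of `ηP⁻` yields `g₁P⁺ = g₀(ηA₀ + 1)`.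
Then `g₀M₀ = (ηg₀P⁻ + g₁(ζ + D₁)) P⁺ = 0`, moving `P⁺` across `ζ + D₀` by `P⁺D₀ = D₁P⁺`.
-/

open Matrix

lemma SemiconjBy.smul_add_one {S A : Type*} [CommSemiring S] [Semiring A] [Algebra S A]
    {P X Y : A} (h : SemiconjBy P X Y) (c : S) :
    SemiconjBy P (c • X + 1) (c • Y + 1) :=
  (h.smul_right c).add_right (.one_right P)

lemma SemiconjBy.smul_one_add {S A : Type*} [CommSemiring S] [Semiring A] [Algebra S A]
    {P X Y : A} (h : SemiconjBy P X Y) (c : S) :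
    SemiconjBy P (c • 1 + X) (c • 1 + Y) :=
  ((SemiconjBy.one_right P).smul_right c).add_right h

variable {n R : Type*} [Fintype n] [DecidableEq n] [CommRing R]

def nahmPencil (A B D : Matrix n n R) (η ζ : R) : Matrix n n R :=
  (η * ζ) • A + η • B + ζ • 1 + D

lemma nahmPencil_eq_of_eq_add_mul {A B D P Q : Matrix n n R} (hB : B = P * Q + A * D) (η ζ : R) :
    nahmPencil A B D η ζ = η • (P * Q) + (η • A + 1) * (ζ • 1 + D) := by
  simp only [nahmPencil, hB, mul_add, add_mul, smul_add, Matrix.mul_smul, Matrix.smul_mul,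
    smul_smul, Matrix.one_mul, Matrix.mul_one, mul_comm ζ η]
  abel

lemma nahmPencil_eq_of_eq_add_mul' {A B D P Q : Matrix n n R} (hB : B = P * Q + D * A) (η ζ : R) :
    nahmPencil A B D η ζ = η • (P * Q) + (ζ • 1 + D) * (η • A + 1) := by
  simp only [nahmPencil, hB, mul_add, add_mul, smul_add, Matrix.mul_smul, Matrix.smul_mul,
    smul_smul, Matrix.one_mul, Matrix.mul_one]
  abel

lemma vecMul_eq_of_vecMul_nahmPencil_eq_zero {A0 A1 B1 D1 Pp Pm : Matrix n n R}
    (hA : Pm * A1 = A0 * Pm) (hB : B1 = Pp * Pm + D1 * A1) (hPm : IsUnit Pm)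
    {η ζ : R} (hη : IsUnit η) {g0 g1 : n → R}
    (hg1 : g1 ᵥ* nahmPencil A1 B1 D1 η ζ = 0)
    (hW : η • (g0 ᵥ* Pm) + g1 ᵥ* (ζ • 1 + D1) = 0) :
    g1 ᵥ* Pp = g0 ᵥ* (η • A0 + 1) := by
  have hW' : g1 ᵥ* (ζ • 1 + D1) = -(g0 ᵥ* (η • Pm)) := by
    rw [vecMul_smul]; exact eq_neg_of_add_eq_zero_right hW
  have hunit : IsUnit (η • Pm) := by
    simpa only [Units.smul_def, IsUnit.unit_spec] using hPm.smul hη.unit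
  refine sub_eq_zero.1 (vecMul_injective_of_isUnit hunit ?_)
  calc (g1 ᵥ* Pp - g0 ᵥ* (η • A0 + 1)) ᵥ* (η • Pm)
      = g1 ᵥ* (η • (Pp * Pm)) - g0 ᵥ* (η • Pm * (η • A1 + 1)) := by
        rw [sub_vecMul, vecMul_vecMul, vecMul_vecMul,
          ((SemiconjBy.smul_add_one hA η).smul_left η).eq, Matrix.mul_smul]
    _ = g1 ᵥ* nahmPencil A1 B1 D1 η ζ := by
        rw [nahmPencil_eq_of_eq_add_mul' hB, vecMul_add, ← vecMul_vecMul _ (ζ • 1 + D1), hW',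
          neg_vecMul, vecMul_vecMul, sub_eq_add_neg]
    _ = 0 ᵥ* (η • Pm) := by rw [hg1, zero_vecMul]

lemma vecMul_nahmPencil_eq_zero {A0 B0 D0 D1 Pp Pm : Matrix n n R}
    (hD : Pp * D0 = D1 * Pp) (hB : B0 = Pm * Pp + A0 * D0) {η ζ : R} {g0 g1 : n → R}
    (hW : η • (g0 ᵥ* Pm) + g1 ᵥ* (ζ • 1 + D1) = 0)
    (hP : g1 ᵥ* Pp = g0 ᵥ* (η • A0 + 1)) :
    g0 ᵥ* nahmPencil A0 B0 D0 η ζ = 0 :=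
  calc g0 ᵥ* nahmPencil A0 B0 D0 η ζ
      = (g0 ᵥ* (η • Pm)) ᵥ* Pp + (g1 ᵥ* Pp) ᵥ* (ζ • 1 + D0) := by
        rw [nahmPencil_eq_of_eq_add_mul hB, vecMul_add, hP, vecMul_vecMul, vecMul_vecMul,
          Matrix.smul_mul]
    _ = (η • (g0 ᵥ* Pm) + g1 ᵥ* (ζ • 1 + D1)) ᵥ* Pp := by
        rw [vecMul_vecMul g1, (SemiconjBy.smul_one_add hD ζ).eq, ← vecMul_vecMul, add_vecMul,
          vecMul_smul]
    _ = 0 := by rw [hW, zero_vecMul]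

theorem stmt8_general (k : ℕ)
    (A0 B0 D0 A1 B1 D1 Pp Pm : Matrix (Fin k) (Fin k) ℂ)
    (h1 : Pm * A1 = A0 * Pm) (h2 : Pp * D0 = D1 * Pp)
    (h3 : B0 = Pm * Pp + A0 * D0) (h4 : B1 = Pp * Pm + D1 * A1)
    (hPm : IsUnit Pm)
    (η ζ : ℂ) (hη : η ≠ 0) (g0 g1 : Fin k → ℂ)
    (hg1 : g1 ᵥ* ((η * ζ) • A1 + η • B1 + ζ • (1 : Matrix (Fin k) (Fin k) ℂ) + D1) = 0)
    (hW : η • (g0 ᵥ* Pm) + g1 ᵥ* (ζ • (1 : Matrix (Fin k) (Fin k) ℂ) + D1) = 0) :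
    g1 ᵥ* Pp = g0 ᵥ* (η • A0 + 1) ∧
      g0 ᵥ* ((η * ζ) • A0 + η • B0 + ζ • (1 : Matrix (Fin k) (Fin k) ℂ) + D0) = 0 := by
  have hP : g1 ᵥ* Pp = g0 ᵥ* (η • A0 + 1) :=
    vecMul_eq_of_vecMul_nahmPencil_eq_zero h1 h4 hPm hη.isUnit hg1 hW
  exact ⟨hP, vecMul_nahmPencil_eq_zero h2 h3 hW hP⟩

theorem stmt8 (k : ℕ) (hk : 1 ≤ k)
    (A0 B0 D0 A1 B1 D1 Pp Pm : Matrix (Fin k) (Fin k) ℂ)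
    (h1 : Pm * A1 = A0 * Pm) (h2 : Pp * D0 = D1 * Pp)
    (h3 : B0 = Pm * Pp + A0 * D0) (h4 : B1 = Pp * Pm + D1 * A1)
    (hPm : IsUnit Pm)
    (η ζ : ℂ) (hη : η ≠ 0) (g0 g1 : Fin k → ℂ)
    (hg1 : g1 ᵥ* ((η * ζ) • A1 + η • B1 + ζ • (1 : Matrix (Fin k) (Fin k) ℂ) + D1) = 0)
    (hW : η • (g0 ᵥ* Pm) + g1 ᵥ* (ζ • (1 : Matrix (Fin k) (Fin k) ℂ) + D1) = 0) :
    g1 ᵥ* Pp = g0 ᵥ* (η • A0 + 1) ∧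
      g0 ᵥ* ((η * ζ) • A0 + η • B0 + ζ • (1 : Matrix (Fin k) (Fin k) ℂ) + D0) = 0 :=
  stmt8_general k A0 B0 D0 A1 B1 D1 Pp Pm h1 h2 h3 h4 hPm η ζ hη g0 g1 hg1 hW
end

section
/- Let T₁, T₂, T₃ : ℝ → Matrix(k,k,ℂ) be matrix-valued functions differentiable at z₀ ∈ ℝ. For ζ ∈ ℂ define A(ζ)(z) = (T₁(z) + i·T₂(z)) − 2i·ζ·T₃(z) + ζ²·(T₁(z) − i·T₂(z)) and A₊(ζ)(z) = −i·T₃(z) + ζ·(T₁(z) − i·T₂(z)). Then the Nahm equations T₁'(z₀) = [T₂(z₀), T₃(z₀)], T₂'(z₀) = [T₃(z₀), T₁(z₀)], T₃'(z₀) = [T₁(z₀), T₂(z₀)] hold if and only if for every ζ ∈ ℂ the Lax equation (d/dz)A(ζ)(z₀) = [A(ζ)(z₀), A₊(ζ)(z₀)] holds. -/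
open Matrix

attribute [local instance] Matrix.normedAddCommGroup Matrix.normedSpace

/-- `A(ζ) = (T₁ + i T₂) − 2iζ T₃ + ζ² (T₁ − i T₂)`. -/
noncomputable def laxA (k : ℕ) (T1 T2 T3 : ℝ → Matrix (Fin k) (Fin k) ℂ) (ζ : ℂ)
    (z : ℝ) : Matrix (Fin k) (Fin k) ℂ :=
  (T1 z + Complex.I • T2 z) - (2 * Complex.I * ζ) • T3 z + (ζ ^ 2) • (T1 z - Complex.I • T2 z)

/-- `A₊(ζ) = −i T₃ + ζ (T₁ − i T₂)`. -/
noncomputable def laxAPlus (k : ℕ) (T1 T2 T3 : ℝ → Matrix (Fin k) (Fin k) ℂ) (ζ : ℂ)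
    (z : ℝ) : Matrix (Fin k) (Fin k) ℂ :=
  (-Complex.I) • T3 z + ζ • (T1 z - Complex.I • T2 z)

lemma derivA_eq (k : ℕ) (T1 T2 T3 : ℝ → Matrix (Fin k) (Fin k) ℂ) (z0 : ℝ)
    (h1 : DifferentiableAt ℝ T1 z0) (h2 : DifferentiableAt ℝ T2 z0)
    (h3 : DifferentiableAt ℝ T3 z0) (ζ : ℂ) :
    deriv (laxA k T1 T2 T3 ζ) z0 =
      (deriv T1 z0 + Complex.I • deriv T2 z0) - (2 * Complex.I * ζ) • deriv T3 z0
        + (ζ ^ 2) • (deriv T1 z0 - Complex.I • deriv T2 z0) := by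
  have H : HasDerivAt (laxA k T1 T2 T3 ζ)
      ((deriv T1 z0 + Complex.I • deriv T2 z0) - (2 * Complex.I * ζ) • deriv T3 z0
        + (ζ ^ 2) • (deriv T1 z0 - Complex.I • deriv T2 z0)) z0 :=
    ((h1.hasDerivAt.add ((h2.hasDerivAt).const_smul Complex.I)).sub
      ((h3.hasDerivAt).const_smul (2 * Complex.I * ζ))).add
      ((h1.hasDerivAt.sub ((h2.hasDerivAt).const_smul Complex.I)).const_smul (ζ ^ 2))
  exact H.deriv

theorem stmt12 (k : ℕ) (hk : 1 ≤ k) (T1 T2 T3 : ℝ → Matrix (Fin k) (Fin k) ℂ) (z0 : ℝ)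
    (h1 : DifferentiableAt ℝ T1 z0) (h2 : DifferentiableAt ℝ T2 z0)
    (h3 : DifferentiableAt ℝ T3 z0) :
    (deriv T1 z0 = T2 z0 * T3 z0 - T3 z0 * T2 z0 ∧
      deriv T2 z0 = T3 z0 * T1 z0 - T1 z0 * T3 z0 ∧
      deriv T3 z0 = T1 z0 * T2 z0 - T2 z0 * T1 z0) ↔
    (∀ ζ : ℂ,
      deriv (laxA k T1 T2 T3 ζ) z0 =
        laxA k T1 T2 T3 ζ z0 * laxAPlus k T1 T2 T3 ζ z0 -
          laxAPlus k T1 T2 T3 ζ z0 * laxA k T1 T2 T3 ζ z0) := by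
  constructor
  · rintro ⟨e1, e2, e3⟩ ζ
    rw [derivA_eq k T1 T2 T3 z0 h1 h2 h3 ζ, e1, e2, e3]
    simp only [laxA, laxAPlus, mul_add, add_mul, mul_sub, sub_mul, smul_mul_assoc,
      mul_smul_comm, smul_smul, smul_sub, smul_add]
    match_scalars <;> (first | ring1 | (ring_nf; simp only [Complex.I_sq]; ring1) | (ring_nf; simp only [Complex.I_sq]; ring_nf))
  · intro h
    have h0 := h 0
    have hp := h 1
    have hm := h (-1)
    rw [derivA_eq k T1 T2 T3 z0 h1 h2 h3] at h0 hp hm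
    simp only [laxA, laxAPlus, mul_add, add_mul, mul_sub, sub_mul, smul_mul_assoc,
      mul_smul_comm, smul_smul, smul_sub, smul_add] at h0 hp hm
    refine ⟨?_, ?_, ?_⟩
    · linear_combination (norm := (match_scalars <;> (first | ring1 | (ring_nf; simp only [Complex.I_sq]; ring1) | (ring_nf; simp only [Complex.I_sq]; ring_nf)))) ((4 : ℂ)⁻¹) • hp + ((4 : ℂ)⁻¹) • hm
    · linear_combination (norm := (match_scalars <;> (first | ring1 | (ring_nf; simp only [Complex.I_sq]; ring1) | (ring_nf; simp only [Complex.I_sq]; ring_nf)))) (-Complex.I) • h0 + (Complex.I / 4) • hp +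
        (Complex.I / 4) • hm
    · linear_combination (norm := (match_scalars <;> (first | ring1 | (ring_nf; simp only [Complex.I_sq]; ring1) | (ring_nf; simp only [Complex.I_sq]; ring_nf)))) (Complex.I / 4) • hp + (-(Complex.I / 4)) • hm
end

section
/- Let T₀, T₁, T₂, T₃ : ℝ → Matrix(k,k,ℂ) be differentiable functions such that T_j(z) is skew-Hermitian (T_j(z)ᴴ = −T_j(z)) for every z and j. Set σ = T₀ + i·T₁ and τ = T₂ + i·T₃, and write σ* and τ* for their pointwise conjugate transposes. Then the gauged Nahm equations T₁' − [T₀,T₁] = [T₂,T₃], T₂' − [T₀,T₂] = [T₃,T₁], T₃' − [T₀,T₃] = [T₁,T₂] hold at a point z if and only if both τ'(z) = [σ(z), τ(z)] and (σ + σ*)'(z) = [σ(z), σ*(z)] + [τ(z), τ*(z)] hold at z. -/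
open Matrix

attribute [local instance] Matrix.normedAddCommGroup Matrix.normedSpace

/-- Donaldson's complex variable `σ = T₀ + i T₁` (or `τ = T₂ + i T₃`). -/
noncomputable def cplxVar (k : ℕ) (S T : ℝ → Matrix (Fin k) (Fin k) ℂ)
    (z : ℝ) : Matrix (Fin k) (Fin k) ℂ :=
  S z + Complex.I • T z

/-!
Every element of a complex star module is uniquely `A + i B` with `A`, `B` skew-adjoint, since
the star sends `A + i B` to `-A + i B`. For skew-Hermitian `Tⱼ`, the skew parts of
`τ' - [σ, τ]` are `T₂' - [T₀, T₂] + [T₁, T₃]` and `T₃' - [T₀, T₃] - [T₁, T₂]`, the second and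
third Nahm equations, while `σ + σ* = 2i T₁` and `[σ, σ*] + [τ, τ*] = 2i ([T₀, T₁] + [T₂, T₃])`,
so the second complex equation is `2i` times the first Nahm equation.
-/

namespace skewAdjoint

section StarModule

variable {E : Type*} [AddCommGroup E] [Module ℂ E] [StarAddMonoid E] [StarModule ℂ E]

theorem star_add_I_smul {a b : E} (ha : a ∈ skewAdjoint E) (hb : b ∈ skewAdjoint E) :
    star (a + Complex.I • b) = -a + Complex.I • b := by
  rw [mem_iff] at ha hb
  rw [star_add, star_smul, ha, hb, Complex.star_def, Complex.conj_I, neg_smul, smul_neg, neg_neg]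

theorem add_I_smul_eq_zero {a b : E} (ha : a ∈ skewAdjoint E) (hb : b ∈ skewAdjoint E)
    (h : a + Complex.I • b = 0) : a = 0 ∧ b = 0 := by
  have h' : -a + Complex.I • b = 0 := by rw [← star_add_I_smul ha hb, h, star_zero]
  constructor
  · linear_combination (norm := module) (2⁻¹ : ℂ) • h - (2⁻¹ : ℂ) • h'
  · have h2b : ((2 : ℂ) * Complex.I) • b = 0 := by linear_combination (norm := module) h + h'
    exact (smul_eq_zero.1 h2b).resolve_left (by simp)

theorem add_I_smul_inj {a b c d : E} (ha : a ∈ skewAdjoint E) (hb : b ∈ skewAdjoint E)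
    (hc : c ∈ skewAdjoint E) (hd : d ∈ skewAdjoint E) :
    a + Complex.I • b = c + Complex.I • d ↔ a = c ∧ b = d := by
  refine ⟨fun h => ?_, fun ⟨hac, hbd⟩ => hac ▸ hbd ▸ rfl⟩
  simpa only [sub_eq_zero] using
    add_I_smul_eq_zero (sub_mem ha hc) (sub_mem hb hd) (by linear_combination (norm := module) h)

end StarModule

theorem commutator_mem {A : Type*} [Ring A] [StarRing A] {a b : A}
    (ha : a ∈ skewAdjoint A) (hb : b ∈ skewAdjoint A) : a * b - b * a ∈ skewAdjoint A := by
  rw [mem_iff] at *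
  rw [star_sub, star_mul, star_mul, ha, hb]
  noncomm_ring

theorem deriv_mem {F : Type*} [NormedAddCommGroup F] [NormedSpace ℝ F]
    [StarAddMonoid F] [StarModule ℝ F] [ContinuousStar F] {f : ℝ → F}
    (hf : ∀ x, f x ∈ skewAdjoint F) (x : ℝ) : deriv f x ∈ skewAdjoint F := by
  rw [mem_iff, ← deriv.star, funext fun x => mem_iff.1 (hf x), deriv.fun_neg]

end skewAdjoint

section ComplexCommutators

variable {A : Type*} [Ring A] [Algebra ℂ A]

theorem add_I_smul_commutator (a b c d : A) :
    (a + Complex.I • b) * (c + Complex.I • d) - (c + Complex.I • d) * (a + Complex.I • b) =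
      (a * c - c * a - (b * d - d * b)) + Complex.I • (a * d - d * a + (b * c - c * b)) := by
  simp only [add_mul, mul_add, smul_mul_assoc, mul_smul_comm]
  linear_combination (norm := module) Complex.I_sq • (b * d - d * b)

theorem add_I_smul_commutator_neg_add (a b : A) :
    (a + Complex.I • b) * (-a + Complex.I • b) - (-a + Complex.I • b) * (a + Complex.I • b) =
      ((2 : ℂ) * Complex.I) • (a * b - b * a) := by
  simp only [add_mul, mul_add, neg_mul, mul_neg, smul_mul_assoc, mul_smul_comm]
  module

end ComplexCommutators

section CplxVar

variable {k : ℕ} {S T : ℝ → Matrix (Fin k) (Fin k) ℂ}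

theorem conjTranspose_cplxVar {z : ℝ} (hS : (S z)ᴴ = -S z) (hT : (T z)ᴴ = -T z) :
    (cplxVar k S T z)ᴴ = -S z + Complex.I • T z :=
  skewAdjoint.star_add_I_smul hS hT

theorem deriv_cplxVar {z : ℝ} (hS : DifferentiableAt ℝ S z) (hT : DifferentiableAt ℝ T z) :
    deriv (cplxVar k S T) z = deriv S z + Complex.I • deriv T z :=
  (hS.hasDerivAt.add (hT.hasDerivAt.const_smul Complex.I)).deriv

theorem deriv_cplxVar_add_conjTranspose (hS : ∀ w, (S w)ᴴ = -S w) (hT : ∀ w, (T w)ᴴ = -T w)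
    {z : ℝ} (hTz : DifferentiableAt ℝ T z) :
    deriv (fun w => cplxVar k S T w + (cplxVar k S T w)ᴴ) z =
      ((2 : ℂ) * Complex.I) • deriv T z := by
  have h : (fun w => cplxVar k S T w + (cplxVar k S T w)ᴴ) =
      fun w => ((2 : ℂ) * Complex.I) • T w := by
    funext w
    rw [conjTranspose_cplxVar (hS w) (hT w), cplxVar]
    module
  rw [h]
  exact deriv_fun_const_smul _ hTz

end CplxVar

theorem stmt13_general (k : ℕ) (T0 T1 T2 T3 : ℝ → Matrix (Fin k) (Fin k) ℂ)
    (hd1 : Differentiable ℝ T1)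
    (hd2 : Differentiable ℝ T2) (hd3 : Differentiable ℝ T3)
    (hs0 : ∀ z, (T0 z)ᴴ = -(T0 z)) (hs1 : ∀ z, (T1 z)ᴴ = -(T1 z))
    (hs2 : ∀ z, (T2 z)ᴴ = -(T2 z)) (hs3 : ∀ z, (T3 z)ᴴ = -(T3 z))
    (z : ℝ) :
    (deriv T1 z - (T0 z * T1 z - T1 z * T0 z) = T2 z * T3 z - T3 z * T2 z ∧
      deriv T2 z - (T0 z * T2 z - T2 z * T0 z) = T3 z * T1 z - T1 z * T3 z ∧
      deriv T3 z - (T0 z * T3 z - T3 z * T0 z) = T1 z * T2 z - T2 z * T1 z) ↔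
    (deriv (cplxVar k T2 T3) z =
        cplxVar k T0 T1 z * cplxVar k T2 T3 z - cplxVar k T2 T3 z * cplxVar k T0 T1 z ∧
      deriv (fun w => cplxVar k T0 T1 w + (cplxVar k T0 T1 w)ᴴ) z =
        (cplxVar k T0 T1 z * (cplxVar k T0 T1 z)ᴴ - (cplxVar k T0 T1 z)ᴴ * cplxVar k T0 T1 z) +
          (cplxVar k T2 T3 z * (cplxVar k T2 T3 z)ᴴ -
            (cplxVar k T2 T3 z)ᴴ * cplxVar k T2 T3 z)) := by
  have hC : T0 z * T2 z - T2 z * T0 z - (T1 z * T3 z - T3 z * T1 z) ∈ skewAdjoint _ :=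
    sub_mem (skewAdjoint.commutator_mem (hs0 z) (hs2 z))
      (skewAdjoint.commutator_mem (hs1 z) (hs3 z))
  have hD : T0 z * T3 z - T3 z * T0 z + (T1 z * T2 z - T2 z * T1 z) ∈ skewAdjoint _ :=
    add_mem (skewAdjoint.commutator_mem (hs0 z) (hs3 z))
      (skewAdjoint.commutator_mem (hs1 z) (hs2 z))
  have h2I : (2 : ℂ) * Complex.I ≠ 0 := by simp
  -- `(a := …)` keeps `deriv` with the instances of the goal rather than those of `deriv_mem`.
  rw [deriv_cplxVar (hd2 z) (hd3 z), deriv_cplxVar_add_conjTranspose hs0 hs1 (hd1 z),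
    conjTranspose_cplxVar (hs0 z) (hs1 z), conjTranspose_cplxVar (hs2 z) (hs3 z),
    cplxVar, cplxVar, add_I_smul_commutator, add_I_smul_commutator_neg_add,
    add_I_smul_commutator_neg_add, ← smul_add, smul_right_inj h2I,
    skewAdjoint.add_I_smul_inj (a := deriv T2 z) (b := deriv T3 z)
      (skewAdjoint.deriv_mem hs2 z) (skewAdjoint.deriv_mem hs3 z) hC hD]
  simp only [sub_eq_iff_eq_add]
  constructor
  · rintro ⟨h1, h2, h3⟩
    exact ⟨⟨by rw [h2]; abel, by rw [h3, add_comm]⟩, by rw [h1, add_comm]⟩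
  · rintro ⟨⟨h2, h3⟩, h1⟩
    exact ⟨by rw [h1, add_comm], by rw [h2]; abel, by rw [h3, add_comm]⟩

theorem stmt13 (k : ℕ) (hk : 1 ≤ k) (T0 T1 T2 T3 : ℝ → Matrix (Fin k) (Fin k) ℂ)
    (hd0 : Differentiable ℝ T0) (hd1 : Differentiable ℝ T1)
    (hd2 : Differentiable ℝ T2) (hd3 : Differentiable ℝ T3)
    (hs0 : ∀ z, (T0 z)ᴴ = -(T0 z)) (hs1 : ∀ z, (T1 z)ᴴ = -(T1 z))
    (hs2 : ∀ z, (T2 z)ᴴ = -(T2 z)) (hs3 : ∀ z, (T3 z)ᴴ = -(T3 z))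
    (z : ℝ) :
    (deriv T1 z - (T0 z * T1 z - T1 z * T0 z) = T2 z * T3 z - T3 z * T2 z ∧
      deriv T2 z - (T0 z * T2 z - T2 z * T0 z) = T3 z * T1 z - T1 z * T3 z ∧
      deriv T3 z - (T0 z * T3 z - T3 z * T0 z) = T1 z * T2 z - T2 z * T1 z) ↔
    (deriv (cplxVar k T2 T3) z =
        cplxVar k T0 T1 z * cplxVar k T2 T3 z - cplxVar k T2 T3 z * cplxVar k T0 T1 z ∧
      deriv (fun w => cplxVar k T0 T1 w + (cplxVar k T0 T1 w)ᴴ) z =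
        (cplxVar k T0 T1 z * (cplxVar k T0 T1 z)ᴴ - (cplxVar k T0 T1 z)ᴴ * cplxVar k T0 T1 z) +
          (cplxVar k T2 T3 z * (cplxVar k T2 T3 z)ᴴ -
            (cplxVar k T2 T3 z)ᴴ * cplxVar k T2 T3 z)) :=
  stmt13_general k T0 T1 T2 T3 hd1 hd2 hd3 hs0 hs1 hs2 hs3 z
end

section
/- Let A, B : ℝ → Matrix(k,k,ℂ) with A differentiable and satisfying the Lax equation A'(z) = A(z)·B(z) − B(z)·A(z) for all z ∈ ℝ. Then for every η ∈ ℂ the function z ↦ det(η·I − A(z)) is constant on ℝ; in particular the coefficients of the characteristic polynomial of A(z) are conserved quantities. -/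
open Matrix

attribute [local instance] Matrix.normedAddCommGroup Matrix.normedSpace

/-!
By Jacobi's formula the derivative of `det (η • 1 - A z)` is `trace (adjugate M * M')` with
`M = η • 1 - A z`. The Lax equation gives `M' = M * B - B * M`, and since `adjugate M` commutes
with `M` (both products equal `det M • 1`), cyclicity of the trace makes this derivative vanish.
-/

open Finset Equiv

namespace Matrix

variable {n : Type*} [Fintype n] [DecidableEq n]

section CommRing

variable {R : Type*} [CommRing R]

theorem trace_adjugate_mul (M N : Matrix n n R) :
    trace (adjugate M * N) = ∑ i, (M.updateCol i fun r => N r i).det := by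
  simp only [← cramer_apply, cramer_eq_adjugate_mulVec, trace, diag, mul_apply, mulVec,
    dotProduct]

theorem det_updateCol_eq_sum_perm (M : Matrix n n R) (v : n → R) (i : n) :
    (M.updateCol i v).det =
      ∑ σ : Perm n, (Perm.sign σ : R) * ((∏ j ∈ univ.erase i, M (σ j) j) * v (σ i)) := by
  rw [det_apply']
  refine sum_congr rfl fun σ _ => ?_
  rw [← mul_prod_erase univ _ (mem_univ i), updateCol_self, mul_comm (v (σ i))]
  congr 2
  exact prod_congr rfl fun j hj => by rw [updateCol_ne (ne_of_mem_erase hj)]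

theorem trace_adjugate_mul_commutator (M N : Matrix n n R) :
    trace (adjugate M * (M * N - N * M)) = 0 := by
  rw [Matrix.mul_sub, trace_sub, ← Matrix.mul_assoc, adjugate_mul, ← Matrix.mul_assoc,
    trace_mul_cycle (adjugate M) N M, mul_adjugate, sub_self]

end CommRing

variable {𝕜 𝔸 : Type*} [NontriviallyNormedField 𝕜] [NormedCommRing 𝔸] [NormedAlgebra 𝕜 𝔸]

theorem hasDerivAt_det {M : 𝕜 → Matrix n n 𝔸} {M' : Matrix n n 𝔸} {z : 𝕜}
    (hM : ∀ i j, HasDerivAt (fun t => M t i j) (M' i j) z) :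
    HasDerivAt (fun t => (M t).det) (trace (adjugate (M z) * M')) z := by
  have hsum : HasDerivAt (fun t => (M t).det)
      (∑ σ : Perm n, (Perm.sign σ : 𝔸) *
        ∑ i, (∏ j ∈ univ.erase i, M z (σ j) j) • M' (σ i) i) z := by
    simp only [det_apply']
    exact .fun_sum fun σ _ => (HasDerivAt.fun_finsetProd fun i _ => hM (σ i) i).const_mul _
  convert hsum using 1
  simp only [trace_adjugate_mul, det_updateCol_eq_sum_perm, smul_eq_mul, mul_sum]
  exact sum_comm

theorem hasDerivAt_det_smul_one_sub_of_lax {A B : 𝕜 → Matrix n n 𝔸} {z : 𝕜}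
    (hA : ∀ i j, HasDerivAt (fun t => A t i j) ((A z * B z - B z * A z) i j) z) (η : 𝔸) :
    HasDerivAt (fun t => (η • (1 : Matrix n n 𝔸) - A t).det) 0 z := by
  set M := η • (1 : Matrix n n 𝔸) - A z
  have hcomm : M * B z - B z * M = -(A z * B z - B z * A z) := by
    simp only [M, Matrix.sub_mul, Matrix.mul_sub, Matrix.smul_mul, Matrix.mul_smul,
      Matrix.one_mul, Matrix.mul_one]
    abel
  have hM : ∀ i j, HasDerivAt (fun t => (η • (1 : Matrix n n 𝔸) - A t) i j)
      ((M * B z - B z * M) i j) z := fun i j => by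
    rw [hcomm]
    exact (hA i j).const_sub _
  simpa only [M, trace_adjugate_mul_commutator] using hasDerivAt_det hM

end Matrix

theorem stmt14_general (k : ℕ) (A B : ℝ → Matrix (Fin k) (Fin k) ℂ)
    (hLax : ∀ z : ℝ, HasDerivAt A (A z * B z - B z * A z) z) :
    ∀ η : ℂ, ∀ z w : ℝ,
      (η • (1 : Matrix (Fin k) (Fin k) ℂ) - A z).det =
        (η • (1 : Matrix (Fin k) (Fin k) ℂ) - A w).det := by
  intro η
  have hderiv (z : ℝ) :
      HasDerivAt (fun t => (η • (1 : Matrix (Fin k) (Fin k) ℂ) - A t).det) 0 z :=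
    hasDerivAt_det_smul_one_sub_of_lax
      (fun i j => hasDerivAt_pi.mp (hasDerivAt_pi.mp (hLax z) i) j) η
  exact is_const_of_deriv_eq_zero (fun z => (hderiv z).differentiableAt) fun z => (hderiv z).deriv

theorem stmt14 (k : ℕ) (hk : 1 ≤ k) (A B : ℝ → Matrix (Fin k) (Fin k) ℂ)
    (hLax : ∀ z : ℝ, HasDerivAt A (A z * B z - B z * A z) z) :
    ∀ η : ℂ, ∀ z w : ℝ,
      (η • (1 : Matrix (Fin k) (Fin k) ℂ) - A z).det =
        (η • (1 : Matrix (Fin k) (Fin k) ℂ) - A w).det :=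
  stmt14_general k A B hLax
end

section
/- Let σ, τ : ℝ → Matrix(k,k,ℂ) with τ differentiable at z ∈ ℝ and σ continuous at z. For h > 0 set β*₀(h) = τ(z), β*₂(h) = τ(z + 2h), and γ*(h) = (1/(2h))·I + σ(z + h). Then the expression β*₂(h)·γ*(h) − γ*(h)·β*₀(h) tends to τ'(z) − [σ(z), τ(z)] as h → 0⁺. -/
open Matrix Filter

attribute [local instance] Matrix.normedAddCommGroup Matrix.normedSpace

theorem stmt15 (k : ℕ) (hk : 1 ≤ k) (σ τ : ℝ → Matrix (Fin k) (Fin k) ℂ) (z : ℝ)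
    (hτ : DifferentiableAt ℝ τ z) (hσ : ContinuousAt σ z) :
    Tendsto
      (fun h : ℝ =>
        τ (z + 2 * h) * ((1 / (2 * h)) • (1 : Matrix (Fin k) (Fin k) ℂ) + σ (z + h)) -
          ((1 / (2 * h)) • (1 : Matrix (Fin k) (Fin k) ℂ) + σ (z + h)) * τ z)
      (nhdsWithin 0 (Set.Ioi 0))
      (nhds (deriv τ z - (σ z * τ z - τ z * σ z))) := by
  have hmap : Tendsto (fun h : ℝ => z + 2 * h) (nhdsWithin 0 (Set.Ioi 0))
      (nhdsWithin z {z}ᶜ) := by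
    apply Tendsto.mono_right _ (nhdsWithin_mono z (fun x hx => ne_of_gt hx : Set.Ioi z ⊆ {z}ᶜ))
    apply tendsto_nhdsWithin_of_tendsto_nhds_of_eventually_within
    · have : Tendsto (fun h : ℝ => z + 2 * h) (nhds 0) (nhds (z + 2 * 0)) := by
        exact (tendsto_const_nhds.add (tendsto_id.const_mul 2))
      simpa using this.mono_left nhdsWithin_le_nhds
    · filter_upwards [self_mem_nhdsWithin] with h hh
      have : (0:ℝ) < h := hh
      simp only [Set.mem_Ioi]
      linarith
  have hslope : Tendsto (fun h : ℝ => slope τ z (z + 2 * h)) (nhdsWithin 0 (Set.Ioi 0))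
      (nhds (deriv τ z)) :=
    ((hasDerivAt_iff_tendsto_slope.mp hτ.hasDerivAt).comp hmap)
  have hmap1 : Tendsto (fun h : ℝ => z + h) (nhdsWithin 0 (Set.Ioi 0)) (nhds z) := by
    have : Tendsto (fun h : ℝ => z + h) (nhds 0) (nhds (z + 0)) :=
      tendsto_const_nhds.add tendsto_id
    simpa using this.mono_left nhdsWithin_le_nhds
  have hmap2 : Tendsto (fun h : ℝ => z + 2 * h) (nhdsWithin 0 (Set.Ioi 0)) (nhds z) := by
    have : Tendsto (fun h : ℝ => z + 2 * h) (nhds 0) (nhds (z + 2 * 0)) :=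
      tendsto_const_nhds.add (tendsto_id.const_mul 2)
    simpa using this.mono_left nhdsWithin_le_nhds
  have hτc : ContinuousAt τ z := hτ.continuousAt
  have hσ1 : Tendsto (fun h : ℝ => σ (z + h)) (nhdsWithin 0 (Set.Ioi 0)) (nhds (σ z)) :=
    hσ.tendsto.comp hmap1
  have hτ2 : Tendsto (fun h : ℝ => τ (z + 2 * h)) (nhdsWithin 0 (Set.Ioi 0)) (nhds (τ z)) :=
    hτc.tendsto.comp hmap2
  have hcomm : Tendsto (fun h : ℝ => τ (z + 2 * h) * σ (z + h) - σ (z + h) * τ z)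
      (nhdsWithin 0 (Set.Ioi 0)) (nhds (τ z * σ z - σ z * τ z)) :=
    (hτ2.mul hσ1).sub (hσ1.mul tendsto_const_nhds)
  have key := hslope.add hcomm
  have heq : ∀ h : ℝ, h ≠ 0 →
      τ (z + 2 * h) * ((1 / (2 * h)) • (1 : Matrix (Fin k) (Fin k) ℂ) + σ (z + h)) -
        ((1 / (2 * h)) • (1 : Matrix (Fin k) (Fin k) ℂ) + σ (z + h)) * τ z =
      slope τ z (z + 2 * h) + (τ (z + 2 * h) * σ (z + h) - σ (z + h) * τ z) := by
    intro h hh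
    rw [slope_def_module]
    simp only [add_sub_cancel_left, mul_add, add_mul, Matrix.mul_smul, Matrix.smul_mul,
      mul_one, one_mul, smul_sub]
    rw [show ((2:ℝ) * h)⁻¹ = 1 / (2 * h) by ring]
    abel
  have hfin : (fun h : ℝ =>
        τ (z + 2 * h) * ((1 / (2 * h)) • (1 : Matrix (Fin k) (Fin k) ℂ) + σ (z + h)) -
          ((1 / (2 * h)) • (1 : Matrix (Fin k) (Fin k) ℂ) + σ (z + h)) * τ z) =ᶠ[nhdsWithin 0 (Set.Ioi 0)]
      (fun h : ℝ => slope τ z (z + 2 * h) + (τ (z + 2 * h) * σ (z + h) - σ (z + h) * τ z)) := by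
    filter_upwards [self_mem_nhdsWithin] with h hh
    exact heq h (ne_of_gt hh)
  have : deriv τ z - (σ z * τ z - τ z * σ z) = deriv τ z + (τ z * σ z - σ z * τ z) := by abel
  rw [this]
  exact Tendsto.congr' hfin.symm key
end

section
/- Let σ, τ : ℝ → Matrix(k,k,ℂ) with σ differentiable at z ∈ ℝ and τ continuous at z. For h > 0 set γ*₋(h) = (1/(2h))·I + σ(z − h), γ₋(h) = γ*₋(h)ᴴ, γ*₊(h) = (1/(2h))·I + σ(z + h), γ₊(h) = γ*₊(h)ᴴ. Then the expression γ*₋(h)·γ₋(h) − γ₊(h)·γ*₊(h) + [τ(z), τ(z)ᴴ] tends to −( (σ + σᴴ)'(z) − [σ(z), σ(z)ᴴ] − [τ(z), τ(z)ᴴ] ) as h → 0⁺, where (σ + σᴴ)' denotes the derivative of z ↦ σ(z) + σ(z)ᴴ. -/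
/-!
Expanding the two products, the `1/(4h²)` terms cancel and the cross terms combine into
minus the symmetric difference quotient `(F (z + h) - F (z - h)) / (2h)` of `F = σ + σᴴ`,
which tends to `-F' z`; the remaining terms `σ (z - h) σ (z - h)ᴴ - σ (z + h)ᴴ σ (z + h)` tend
to `[σ z, (σ z)ᴴ]` by continuity of `σ` at `z`.
-/

open Matrix Filter Topology

attribute [local instance] Matrix.normedAddCommGroup Matrix.normedSpace

theorem HasDerivAt.tendsto_symmetric_slope_zero {𝕜 E : Type*} [NontriviallyNormedField 𝕜]
    [CharZero 𝕜] [NormedAddCommGroup E] [NormedSpace 𝕜 E] {f : 𝕜 → E} {f' : E} {x : 𝕜}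
    (hf : HasDerivAt f f' x) :
    Tendsto (fun t ↦ (2 * t)⁻¹ • (f (x + t) - f (x - t))) (𝓝[≠] 0) (𝓝 f') := by
  have hneg : Tendsto (fun t : 𝕜 ↦ -t) (𝓝[≠] 0) (𝓝[≠] 0) := by
    have := (Filter.neg_nhdsNE (a := (0 : 𝕜))).le
    rwa [neg_zero] at this
  have hmean := (hf.tendsto_slope_zero.add (hf.tendsto_slope_zero.comp hneg)).const_smul (2⁻¹ : 𝕜)
  rw [← two_smul 𝕜 f', smul_smul, inv_mul_cancel₀ two_ne_zero, one_smul] at hmean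
  refine hmean.congr fun t ↦ ?_
  simp only [Function.comp_apply, ← sub_eq_add_neg, inv_neg, mul_inv, ← smul_smul]
  module

theorem smul_one_add_mul_star_sub_star_mul_smul_one_add {R A : Type*} [CommRing R] [StarRing R]
    [TrivialStar R] [Ring A] [StarRing A] [Algebra R A] [StarModule R A] (c : R) (a b : A) :
    (c • 1 + a) * star (c • 1 + a) - star (c • 1 + b) * (c • 1 + b) =
      c • ((a + star a) - (b + star b)) + (a * star a - star b * b) := by
  simp only [star_add, star_smul, star_trivial, star_one, add_mul, mul_add, smul_mul_assoc,
    mul_smul_comm, one_mul, mul_one, smul_add, smul_sub]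
  abel

theorem stmt16_general (k : ℕ) (σ τ : ℝ → Matrix (Fin k) (Fin k) ℂ) (z : ℝ)
    (hσ : DifferentiableAt ℝ σ z) :
    Tendsto
      (fun h : ℝ =>
        ((1 / (2 * h)) • (1 : Matrix (Fin k) (Fin k) ℂ) + σ (z - h)) *
            ((1 / (2 * h)) • (1 : Matrix (Fin k) (Fin k) ℂ) + σ (z - h))ᴴ -
          ((1 / (2 * h)) • (1 : Matrix (Fin k) (Fin k) ℂ) + σ (z + h))ᴴ *
            ((1 / (2 * h)) • (1 : Matrix (Fin k) (Fin k) ℂ) + σ (z + h)) +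
          (τ z * (τ z)ᴴ - (τ z)ᴴ * τ z))
      (nhdsWithin 0 (Set.Ioi 0))
      (nhds (-(deriv (fun w => σ w + (σ w)ᴴ) z -
        (σ z * (σ z)ᴴ - (σ z)ᴴ * σ z) - (τ z * (τ z)ᴴ - (τ z)ᴴ * τ z)))) := by
  set F : ℝ → Matrix (Fin k) (Fin k) ℂ := fun w => σ w + (σ w)ᴴ with hF_def
  have hF : Tendsto (fun h : ℝ ↦ (2 * h)⁻¹ • (F (z + h) - F (z - h))) (𝓝[>] 0) (𝓝 (deriv F z)) :=
    (hσ.add hσ.star).hasDerivAt.tendsto_symmetric_slope_zero.mono_left (nhdsGT_le_nhdsNE 0)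
  have hplus : Tendsto (fun h ↦ σ (z + h)) (𝓝[>] 0) (𝓝 (σ z)) :=
    hσ.continuousAt.tendsto.comp <|
      ((continuous_const_add z).tendsto' 0 z (add_zero z)).mono_left nhdsWithin_le_nhds
  have hminus : Tendsto (fun h ↦ σ (z - h)) (𝓝[>] 0) (𝓝 (σ z)) :=
    hσ.continuousAt.tendsto.comp <|
      ((continuous_sub_left z).tendsto' 0 z (sub_zero z)).mono_left nhdsWithin_le_nhds
  have hquad := (hminus.mul hminus.star).sub (hplus.star.mul hplus)
  convert ((hF.neg.add hquad).add_const (τ z * (τ z)ᴴ - (τ z)ᴴ * τ z)).congr fun h ↦ ?_ using 2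
  · simp only [star_eq_conjTranspose]
    abel
  simp only [hF_def, ← star_eq_conjTranspose, smul_one_add_mul_star_sub_star_mul_smul_one_add]
  rw [one_div, ← smul_neg, neg_sub]

theorem stmt16 (k : ℕ) (hk : 1 ≤ k) (σ τ : ℝ → Matrix (Fin k) (Fin k) ℂ) (z : ℝ)
    (hσ : DifferentiableAt ℝ σ z) (hτ : ContinuousAt τ z) :
    Tendsto
      (fun h : ℝ =>
        ((1 / (2 * h)) • (1 : Matrix (Fin k) (Fin k) ℂ) + σ (z - h)) *
            ((1 / (2 * h)) • (1 : Matrix (Fin k) (Fin k) ℂ) + σ (z - h))ᴴ -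
          ((1 / (2 * h)) • (1 : Matrix (Fin k) (Fin k) ℂ) + σ (z + h))ᴴ *
            ((1 / (2 * h)) • (1 : Matrix (Fin k) (Fin k) ℂ) + σ (z + h)) +
          (τ z * (τ z)ᴴ - (τ z)ᴴ * τ z))
      (nhdsWithin 0 (Set.Ioi 0))
      (nhds (-(deriv (fun w => σ w + (σ w)ᴴ) z -
        (σ z * (σ z)ᴴ - (σ z)ᴴ * σ z) - (τ z * (τ z)ᴴ - (τ z)ᴴ * τ z)))) :=
  stmt16_general k σ τ z hσ
end
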